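/- Let A ⊂ B(X) be a strongly closed algebra with I ∈ A such that every closed subspace invariant under A has a complementary closed subspace also invariant under A. If q ∈ A is a (bounded, idempotent) projection, then the algebra qAq ⊂ B(qX) also has the property that every closed qAq-invariant subspace of qX has a qAq-invariant closed complement. -/

import Mathlib

open Filter Topology

/-- If `A` is a strongly closed unital subalgebra of `B(X)` with complemented
invariant subspace lattice and `q ∈ A` is a projection, then the algebra `qAq ⊆ B(qX)` also
has complemented invariant subspace lattice: every closed `qAq`-invariant subspace `L` of
`qX` has a closed `qAq`-invariant complement inside `qX`. -/
theorem stmt1 {X : Type*} [NormedAddCommGroup X] [NormedSpace ℂ X] [CompleteSpace X]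
    (A : Subalgebra ℂ (X →L[ℂ] X))
    (hA : IsClosed ((fun a : X →L[ℂ] X => (a : X → X)) '' (A : Set (X →L[ℂ] X))))
    (hCISL : ∀ K : Submodule ℂ X, IsClosed (K : Set X) → (∀ a ∈ A, ∀ x ∈ K, a x ∈ K) →
      ∃ Kc : Submodule ℂ X, IsClosed (Kc : Set X) ∧ (∀ a ∈ A, ∀ x ∈ Kc, a x ∈ Kc) ∧
        IsCompl K Kc)
    (q : X →L[ℂ] X) (hqA : q ∈ A) (hq : q * q = q)
    (L : Submodule ℂ X) (hLcl : IsClosed (L : Set X)) (hLq : L ≤ LinearMap.range (q : X →ₗ[ℂ] X))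
    (hLinv : ∀ a ∈ A, ∀ x ∈ L, q (a (q x)) ∈ L) :
    ∃ Lc : Submodule ℂ X, IsClosed (Lc : Set X) ∧ Lc ≤ LinearMap.range (q : X →ₗ[ℂ] X) ∧
      (∀ a ∈ A, ∀ x ∈ Lc, q (a (q x)) ∈ Lc) ∧
      L ⊓ Lc = ⊥ ∧ L ⊔ Lc = LinearMap.range (q : X →ₗ[ℂ] X) := by
  -- q is pointwise idempotent
  have hqq : ∀ x : X, q (q x) = q x := fun x => by
    have := DFunLike.congr_fun hq x
    simpa [ContinuousLinearMap.mul_apply] using this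
  have hrange : ∀ x : X, x ∈ LinearMap.range (q : X →ₗ[ℂ] X) ↔ q x = x := by
    intro x
    constructor
    · rintro ⟨y, rfl⟩; exact hqq y
    · intro h; exact ⟨x, h⟩
  have hrange_closed : IsClosed ((LinearMap.range (q : X →ₗ[ℂ] X) : Submodule ℂ X) : Set X) := by
    have hset : ((LinearMap.range (q : X →ₗ[ℂ] X) : Submodule ℂ X) : Set X) = {x | q x = x} := by
      ext x; simpa using hrange x
    rw [hset]
    exact isClosed_eq q.continuous continuous_id
  -- the closed A-invariant hull of L
  set S : Set X := {y | ∃ a ∈ A, ∃ x ∈ L, a x = y} with hS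
  set K₀ : Submodule ℂ X := Submodule.span ℂ S with hK₀
  set K : Submodule ℂ X := K₀.topologicalClosure with hKdef
  have hK₀inv : ∀ a ∈ A, ∀ x ∈ K₀, a x ∈ K₀ := by
    intro a ha x hx
    have hmap : Submodule.map (a : X →ₗ[ℂ] X) K₀ ≤ K₀ := by
      rw [hK₀, Submodule.map_span]
      refine Submodule.span_mono ?_
      rintro _ ⟨y, ⟨b, hb, z, hz, rfl⟩, rfl⟩
      exact ⟨a * b, mul_mem ha hb, z, hz, rfl⟩
    exact hmap ⟨x, hx, rfl⟩
  have hKinv : ∀ a ∈ A, ∀ x ∈ K, a x ∈ K := by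
    intro a ha x hx
    have : a x ∈ closure ((K₀ : Set X)) :=
      map_mem_closure a.continuous hx (fun y hy => hK₀inv a ha y hy)
    exact this
  have hLK : L ≤ K := by
    intro x hx
    refine Submodule.le_topologicalClosure _ ?_
    exact Submodule.subset_span ⟨1, one_mem A, x, hx, by simp⟩
  have hqK : ∀ x ∈ K, q x ∈ L := by
    have hcomap : K ≤ Submodule.comap (q : X →ₗ[ℂ] X) L := by
      refine Submodule.topologicalClosure_minimal _ ?_ ?_
      · rw [hK₀]
        refine Submodule.span_le.2 ?_
        rintro _ ⟨a, ha, x, hx, rfl⟩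
        have hqx : q x = x := (hrange x).1 (hLq hx)
        have : q (a (q x)) ∈ L := hLinv a ha x hx
        simpa [hqx] using this
      · exact hLcl.preimage q.continuous
    intro x hx
    exact hcomap hx
  obtain ⟨Kc, hKcCl, hKcInv, hcompl⟩ :=
    hCISL K (Submodule.isClosed_topologicalClosure _) hKinv
  refine ⟨Kc ⊓ LinearMap.range (q : X →ₗ[ℂ] X), ?_, inf_le_right, ?_, ?_, ?_⟩
  · exact hKcCl.inter hrange_closed
  · rintro a ha x ⟨hxKc, hxr⟩
    have hqx : q x = x := (hrange x).1 hxr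
    have h1 : a x ∈ Kc := hKcInv a ha x hxKc
    have h2 : q (a x) ∈ Kc := hKcInv q hqA _ h1
    exact ⟨by simpa [hqx] using h2, ⟨a x, by rw [hqx]; rfl⟩⟩
  · apply le_antisymm _ bot_le
    intro x hx
    have h1 : x ∈ K := hLK hx.1
    have h2 : x ∈ Kc := hx.2.1
    have : x ∈ K ⊓ Kc := ⟨h1, h2⟩
    rw [hcompl.inf_eq_bot] at this
    exact this
  · apply le_antisymm
    · exact sup_le hLq inf_le_right
    · intro x hx
      have hqx : q x = x := (hrange x).1 hx
      have hxtop : x ∈ K ⊔ Kc := by rw [hcompl.sup_eq_top]; trivial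
      obtain ⟨k, hk, c, hc, rfl⟩ := Submodule.mem_sup.1 hxtop
      have h1 : q k ∈ L := hqK k hk
      have h2 : q c ∈ Kc := hKcInv q hqA c hc
      have h3 : q c ∈ LinearMap.range (q : X →ₗ[ℂ] X) := ⟨c, rfl⟩
      have : q k + q c = k + c := by
        rw [← map_add]; exact hqx
      rw [← this]
      exact Submodule.add_mem_sup h1 ⟨h2, h3⟩
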